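/- Let G be a connected graph of order n ≥ 2. Then ldim_f(G) = n/2 if and only if every vertex of G has a true twin. -/

import Mathlib

open scoped Classical
open Finset

namespace FracLocal

/-- The local resolving neighborhood of a (potential) edge `uv`:
vertices whose distances to `u` and `v` differ. -/
noncomputable def locRes {V : Type*} [Fintype V] (G : SimpleGraph V) (u v : V) : Finset V :=
  Finset.univ.filter (fun x => G.dist x u ≠ G.dist x v)

/-- A local resolving function: values in `[0,1]` summing to at least `1`
on every local resolving neighborhood of an edge. -/
def IsLRF {V : Type*} [Fintype V] (G : SimpleGraph V) (f : V → ℝ) : Prop :=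
  (∀ x, 0 ≤ f x ∧ f x ≤ 1) ∧ ∀ u v, G.Adj u v → 1 ≤ ∑ x ∈ locRes G u v, f x

/-- The fractional local metric dimension. -/
noncomputable def ldimf {V : Type*} [Fintype V] (G : SimpleGraph V) : ℝ :=
  sInf {w : ℝ | ∃ f : V → ℝ, IsLRF G f ∧ w = ∑ x, f x}

/-- The (integral) local metric dimension. -/
noncomputable def ldim {V : Type*} [Fintype V] (G : SimpleGraph V) : ℕ :=
  sInf {k : ℕ | ∃ S : Finset V, S.card = k ∧
    ∀ u v, G.Adj u v → (S ∩ locRes G u v).Nonempty}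

/-- `l(G)`: the minimum cardinality of a local resolving neighborhood of an edge. -/
noncomputable def lG {V : Type*} [Fintype V] (G : SimpleGraph V) : ℕ :=
  sInf {k : ℕ | ∃ u v, G.Adj u v ∧ (locRes G u v).card = k}

/-- The closed neighborhood `N[u]`. -/
def closedNbhd {V : Type*} (G : SimpleGraph V) (u : V) : Set V :=
  insert u (G.neighborSet u)

/-- `u` and `v` are true twins: distinct vertices with `N[u] = N[v]`. -/
def TrueTwins {V : Type*} (G : SimpleGraph V) (u v : V) : Prop :=
  u ≠ v ∧ closedNbhd G u = closedNbhd G v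

section Helpers

set_option linter.unusedSectionVars false

variable {V : Type*} [Fintype V] {G : SimpleGraph V} {u v x : V}

lemma TrueTwins.symm (h : TrueTwins G u v) : TrueTwins G v u := ⟨h.1.symm, h.2.symm⟩

lemma TrueTwins.adj (h : TrueTwins G u v) : G.Adj u v := by
  have hv : v ∈ closedNbhd G v := Set.mem_insert _ _
  rw [← h.2] at hv
  rcases hv with hv | hv
  · exact absurd hv.symm h.1
  · exact hv

lemma dist_le_of_closedNbhd (hconn : G.Connected)
    (htw : closedNbhd G u = closedNbhd G v) (hx : x ≠ u) :
    G.dist x v ≤ G.dist x u := by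
  rw [SimpleGraph.dist_comm (u := x) (v := v), SimpleGraph.dist_comm (u := x) (v := u)]
  obtain ⟨p, hp⟩ := hconn.exists_walk_length_eq_dist u x
  cases p with
  | nil => exact absurd rfl hx
  | @cons _ w _ h q =>
    have hw : w ∈ closedNbhd G v := by
      rw [← htw]; exact Set.mem_insert_of_mem _ h
    rcases hw with hw | hw
    · subst hw
      calc G.dist w x ≤ q.length := SimpleGraph.dist_le q
        _ ≤ G.dist u x := by rw [← hp]; simp [SimpleGraph.Walk.length_cons]
    · calc G.dist v x ≤ (SimpleGraph.Walk.cons hw q).length := SimpleGraph.dist_le _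
        _ = G.dist u x := by rw [← hp]; simp [SimpleGraph.Walk.length_cons]; rfl

lemma dist_eq_of_twins (hconn : G.Connected)
    (htw : closedNbhd G u = closedNbhd G v) (hxu : x ≠ u) (hxv : x ≠ v) :
    G.dist x u = G.dist x v :=
  le_antisymm (dist_le_of_closedNbhd hconn htw.symm hxv) (dist_le_of_closedNbhd hconn htw hxu)

lemma mem_locRes_iff : x ∈ locRes G u v ↔ G.dist x u ≠ G.dist x v := by
  simp [locRes]

lemma left_mem_locRes (hconn : G.Connected) (hadj : G.Adj u v) : u ∈ locRes G u v := by
  rw [mem_locRes_iff, SimpleGraph.dist_self]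
  exact fun h => hadj.ne ((hconn.dist_eq_zero_iff).mp h.symm)

lemma right_mem_locRes (hconn : G.Connected) (hadj : G.Adj u v) : v ∈ locRes G u v := by
  rw [mem_locRes_iff, SimpleGraph.dist_self]
  rw [SimpleGraph.dist_comm (u := v) (v := u)]
  exact fun h => hadj.ne ((hconn.dist_eq_zero_iff).mp h)

lemma locRes_of_twins (hconn : G.Connected) (h : TrueTwins G u v) :
    locRes G u v = {u, v} := by
  ext x
  rw [mem_locRes_iff, mem_insert, mem_singleton]
  constructor
  · intro hne
    by_contra hc
    push_neg at hc
    exact hne (dist_eq_of_twins hconn h.2 hc.1 hc.2)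
  · rintro (rfl | rfl)
    · exact mem_locRes_iff.mp (left_mem_locRes hconn h.adj)
    · exact mem_locRes_iff.mp (right_mem_locRes hconn h.adj)

lemma three_le_card_locRes (hconn : G.Connected) (hadj : G.Adj u v)
    (h : ¬ TrueTwins G u v) : 3 ≤ (locRes G u v).card := by
  have hne : closedNbhd G u ≠ closedNbhd G v := fun hc => h ⟨hadj.ne, hc⟩
  -- find a vertex in the symmetric difference
  have key : ∃ x, x ∉ ({u, v} : Finset V) ∧ x ∈ locRes G u v := by
    have : ∃ x, (x ∈ closedNbhd G u ∧ x ∉ closedNbhd G v) ∨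
        (x ∈ closedNbhd G v ∧ x ∉ closedNbhd G u) := by
      by_contra hc
      push_neg at hc
      exact hne (Set.ext fun x => ⟨(hc x).1, (hc x).2⟩)
    obtain ⟨x, hx⟩ := this
    have main : ∀ a b : V, G.Adj a b → x ∈ closedNbhd G a → x ∉ closedNbhd G b →
        x ∉ ({a, b} : Finset V) ∧ x ∈ locRes G a b := by
      intro a b hab hxa hxb
      have hxna : x ≠ a := by
        rintro rfl
        exact hxb (Set.mem_insert_of_mem _ hab.symm)
      have hxnb : x ≠ b := fun hc => hxb (hc ▸ Set.mem_insert _ _)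
      have hadjxa : G.Adj a x := by
        rcases hxa with h1 | h1
        · exact absurd h1 hxna
        · exact h1
      have hd1 : G.dist x a = 1 := by
        rw [SimpleGraph.dist_eq_one_iff_adj]
        exact hadjxa.symm
      have hd2 : G.dist x b ≠ 1 := fun hc =>
        hxb (Set.mem_insert_of_mem _ (SimpleGraph.dist_eq_one_iff_adj.mp hc).symm)
      refine ⟨by simp [hxna, hxnb], ?_⟩
      rw [mem_locRes_iff, hd1]
      exact fun hc => hd2 hc.symm
    rcases hx with ⟨h1, h2⟩ | ⟨h1, h2⟩
    · exact ⟨x, main u v hadj h1 h2⟩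
    · obtain ⟨ha, hb⟩ := main v u hadj.symm h1 h2
      refine ⟨x, ?_, ?_⟩
      · simpa [or_comm] using ha
      · rw [mem_locRes_iff] at hb ⊢
        exact fun hc => hb hc.symm
  obtain ⟨x, hx1, hx2⟩ := key
  have hsub : insert x ({u, v} : Finset V) ⊆ locRes G u v := by
    intro y hy
    rcases Finset.mem_insert.mp hy with rfl | hy
    · exact hx2
    · rcases Finset.mem_insert.mp hy with rfl | hy
      · exact left_mem_locRes hconn hadj
      · rw [Finset.mem_singleton] at hy
        subst hy
        exact right_mem_locRes hconn hadj
  calc 3 = (insert x ({u, v} : Finset V)).card := by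
        rw [Finset.card_insert_of_notMem hx1, Finset.card_insert_of_notMem (by simp [hadj.ne]),
          Finset.card_singleton]
    _ ≤ _ := Finset.card_le_card hsub

lemma two_le_card_locRes (hconn : G.Connected) (hadj : G.Adj u v) :
    2 ≤ (locRes G u v).card := by
  have hsub : ({u, v} : Finset V) ⊆ locRes G u v := by
    intro y hy
    rcases Finset.mem_insert.mp hy with rfl | hy
    · exact left_mem_locRes hconn hadj
    · rw [Finset.mem_singleton] at hy
      subst hy
      exact right_mem_locRes hconn hadj
  calc 2 = ({u, v} : Finset V).card := by
        rw [Finset.card_insert_of_notMem (by simp [hadj.ne]), Finset.card_singleton]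
    _ ≤ _ := Finset.card_le_card hsub

lemma fiber_bound (f : V → ℝ) (s : Finset V) (h2 : 2 ≤ s.card)
    (hp : ∀ x ∈ s, ∀ y ∈ s, x ≠ y → 1 ≤ f x + f y) :
    (s.card : ℝ) / 2 ≤ ∑ x ∈ s, f x := by
  set S := ∑ x ∈ s, f x with hS
  have hcast : ((s.card - 1 : ℕ) : ℝ) = (s.card : ℝ) - 1 := by
    push_cast [Nat.cast_sub (by omega : 1 ≤ s.card)]
    ring
  have h1 : (s.card : ℝ) * ((s.card : ℝ) - 1) ≤
      ∑ x ∈ s, ∑ y ∈ s.erase x, (f x + f y) := by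
    calc (s.card : ℝ) * ((s.card : ℝ) - 1) = ∑ _x ∈ s, ((s.card : ℝ) - 1) := by
          rw [Finset.sum_const, nsmul_eq_mul]
      _ ≤ _ := by
          apply Finset.sum_le_sum
          intro x hx
          calc ((s.card : ℝ) - 1) = ∑ _y ∈ s.erase x, (1 : ℝ) := by
                rw [Finset.sum_const, Finset.card_erase_of_mem hx, nsmul_eq_mul, mul_one, hcast]
            _ ≤ _ := Finset.sum_le_sum (fun y hy =>
                hp x hx y (Finset.mem_of_mem_erase hy) (Ne.symm (Finset.ne_of_mem_erase hy)))
  have h2' : ∑ x ∈ s, ∑ y ∈ s.erase x, (f x + f y) = 2 * ((s.card : ℝ) - 1) * S := by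
    have inner : ∀ x ∈ s, ∑ y ∈ s.erase x, (f x + f y)
        = ((s.card : ℝ) - 1) * f x + (S - f x) := by
      intro x hx
      rw [Finset.sum_add_distrib, Finset.sum_const, Finset.sum_erase_eq_sub hx,
        Finset.card_erase_of_mem hx, nsmul_eq_mul, hcast, ← hS]
    rw [Finset.sum_congr rfl inner, Finset.sum_add_distrib, Finset.sum_sub_distrib,
      ← Finset.mul_sum, Finset.sum_const, nsmul_eq_mul, ← hS]
    ring
  rw [h2'] at h1
  have hge : (2 : ℝ) ≤ (s.card : ℝ) := by exact_mod_cast h2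
  nlinarith


lemma lrf_bdd (G : SimpleGraph V) :
    BddBelow {w : ℝ | ∃ f : V → ℝ, IsLRF G f ∧ w = ∑ x, f x} := by
  refine ⟨0, ?_⟩
  rintro w ⟨f, hf, rfl⟩
  exact Finset.sum_nonneg fun x _ => (hf.1 x).1

lemma half_mem (G : SimpleGraph V) (hconn : G.Connected) :
    ((Fintype.card V : ℝ) / 2) ∈ {w : ℝ | ∃ f : V → ℝ, IsLRF G f ∧ w = ∑ x, f x} := by
  refine ⟨fun _ => 1/2, ⟨fun x => by norm_num, ?_⟩, ?_⟩
  · intro u v hadj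
    have h2 := two_le_card_locRes hconn hadj
    rw [Finset.sum_const, nsmul_eq_mul]
    have h2' : (2 : ℝ) ≤ ((locRes G u v).card : ℝ) := by exact_mod_cast h2
    linarith
  · rw [Finset.sum_const, Finset.card_univ, nsmul_eq_mul]
    ring

end Helpers

end FracLocal

open FracLocal in
/-- For a connected graph `G` of order `n ≥ 2`, `ldim_f(G) = n/2` iff
every vertex of `G` has a true twin. -/
theorem stmt_3 {V : Type*} [Fintype V] (G : SimpleGraph V)
    (hconn : G.Connected) (hn : 2 ≤ Fintype.card V) :
    ldimf G = (Fintype.card V : ℝ) / 2 ↔ ∀ u : V, ∃ v : V, TrueTwins G u v := by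
  constructor
  · intro heq
    by_contra hno
    push_neg at hno
    obtain ⟨u₀, hu₀⟩ := hno
    set f : V → ℝ := fun x => if x = u₀ then 0 else 1/2 with hfdef
    have hIs : IsLRF G f := by
      constructor
      · intro x
        simp only [hfdef]
        split <;> norm_num
      · intro u v hadj
        by_cases htw : TrueTwins G u v
        · rw [locRes_of_twins hconn htw, Finset.sum_pair htw.1]
          have hu : u ≠ u₀ := fun hc => hu₀ v (hc ▸ htw)
          have hv : v ≠ u₀ := fun hc => hu₀ u (hc ▸ htw.symm)
          simp only [hfdef, if_neg hu, if_neg hv]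
          norm_num
        · have h3 := three_le_card_locRes hconn hadj htw
          have step1 : ∑ x ∈ (locRes G u v).erase u₀, f x ≤ ∑ x ∈ locRes G u v, f x := by
            refine Finset.sum_le_sum_of_subset_of_nonneg (Finset.erase_subset _ _) ?_
            intro x _ _
            simp only [hfdef]
            split <;> norm_num
          have step2 : ∑ x ∈ (locRes G u v).erase u₀, f x
              = (((locRes G u v).erase u₀).card : ℝ) * (1/2 : ℝ) := by
            have e : ∑ x ∈ (locRes G u v).erase u₀, f x
                = ∑ _x ∈ (locRes G u v).erase u₀, (1/2 : ℝ) :=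
              Finset.sum_congr rfl
                (fun x hx => by simp only [hfdef, if_neg (Finset.ne_of_mem_erase hx)])
            rw [e, Finset.sum_const, nsmul_eq_mul]
          have hcard : 2 ≤ ((locRes G u v).erase u₀).card := by
            have := Finset.pred_card_le_card_erase (s := locRes G u v) (a := u₀)
            omega
          have hc2 : (2 : ℝ) ≤ (((locRes G u v).erase u₀).card : ℝ) := by exact_mod_cast hcard
          calc (1 : ℝ) = 2 * (1/2) := by norm_num
            _ ≤ (((locRes G u v).erase u₀).card : ℝ) * (1/2) := by linarith
            _ = ∑ x ∈ (locRes G u v).erase u₀, f x := step2.symm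
            _ ≤ _ := step1
    have hsumf : ∑ x, f x = ((Fintype.card V : ℝ) - 1) / 2 := by
      have hfx : ∀ x, f x = 1/2 - (if x = u₀ then (1/2 : ℝ) else 0) := by
        intro x
        simp only [hfdef]
        split <;> norm_num
      rw [Finset.sum_congr rfl (fun x _ => hfx x), Finset.sum_sub_distrib,
        Finset.sum_const, Finset.card_univ, nsmul_eq_mul,
        Finset.sum_ite_eq' Finset.univ u₀ (fun _ => (1/2 : ℝ))]
      simp only [Finset.mem_univ, if_true]
      ring
    have hle : ldimf G ≤ ((Fintype.card V : ℝ) - 1) / 2 :=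
      csInf_le (lrf_bdd G) ⟨f, hIs, hsumf.symm⟩
    rw [heq] at hle
    linarith
  · intro hall
    refine le_antisymm (csInf_le (lrf_bdd G) (half_mem G hconn)) ?_
    refine le_csInf ⟨_, half_mem G hconn⟩ ?_
    rintro w ⟨f, hf, rfl⟩
    have pair : ∀ x y : V, TrueTwins G x y → 1 ≤ f x + f y := by
      intro x y hxy
      have h := hf.2 x y hxy.adj
      rwa [locRes_of_twins hconn hxy, Finset.sum_pair hxy.1] at h
    set c : V → Set V := fun x => closedNbhd G x with hc
    have hmaps : ∀ i ∈ Finset.univ, c i ∈ Finset.univ.image c :=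
      fun i _ => Finset.mem_image_of_mem c (Finset.mem_univ i)
    have hsum := Finset.sum_fiberwise_of_maps_to hmaps f
    have hcardsum := Finset.sum_fiberwise_of_maps_to hmaps (fun _ => (1 : ℝ))
    have hn : ∑ j ∈ Finset.univ.image c,
        ((Finset.univ.filter (fun i => c i = j)).card : ℝ) = (Fintype.card V : ℝ) := by
      simpa [Finset.sum_const, Finset.card_univ] using hcardsum
    have key : ∀ j ∈ Finset.univ.image c,
        ((Finset.univ.filter (fun i => c i = j)).card : ℝ) / 2
          ≤ ∑ i ∈ Finset.univ.filter (fun i => c i = j), f i := by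
      intro j hj
      obtain ⟨a, _, rfl⟩ := Finset.mem_image.mp hj
      obtain ⟨b, hb⟩ := hall a
      have hcard2 : 1 < (Finset.univ.filter (fun i => c i = c a)).card := by
        refine Finset.one_lt_card.mpr ⟨a, ?_, b, ?_, hb.1⟩
        · simp
        · simp only [Finset.mem_filter, Finset.mem_univ, true_and]
          exact hb.2.symm
      refine fiber_bound f _ hcard2 ?_
      intro x hx y hy hxy
      simp only [Finset.mem_filter, Finset.mem_univ, true_and] at hx hy
      exact pair x y ⟨hxy, hx.trans hy.symm⟩
    calc (Fintype.card V : ℝ) / 2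
        = (∑ j ∈ Finset.univ.image c,
            ((Finset.univ.filter (fun i => c i = j)).card : ℝ)) / 2 := by rw [hn]
      _ = ∑ j ∈ Finset.univ.image c,
            ((Finset.univ.filter (fun i => c i = j)).card : ℝ) / 2 := Finset.sum_div _ _ _
      _ ≤ ∑ j ∈ Finset.univ.image c, ∑ i ∈ Finset.univ.filter (fun i => c i = j), f i :=
          Finset.sum_le_sum key
      _ = ∑ i, f i := hsum
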